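/- Let x be an irrational real number with x² ∈ ℚ, and let G = ℤ + ℚ·x = {z + q·x : z ∈ ℤ, q ∈ ℚ}. Then {r ∈ ℝ \ {0} : r·G = G} = {-1, 1}. -/

import Mathlib

open Pointwise

private lemma key_12 (x : ℝ) (hx : Irrational x) (a b c d : ℚ)
    (h : (a : ℝ) + b * x = c + d * x) : a = c ∧ b = d := by
  by_cases hbd : b = d
  · subst hbd
    constructor
    · exact_mod_cast add_right_cancel h
    · rfl
  · exfalso
    have hx' : x = ((a - c) / (d - b) : ℚ) := by
      have hdb : ((d : ℝ) - b) ≠ 0 := by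
        intro h0
        apply hbd
        have : (b : ℝ) = d := by linarith
        exact_mod_cast this
      push_cast; rw [eq_div_iff hdb]
      linear_combination -h
    exact hx ⟨_, hx'.symm⟩

theorem stmt_12 (x : ℝ) (hx : Irrational x) (hx2 : ∃ q : ℚ, x ^ 2 = (q : ℝ)) :
    {r : ℝ | r ≠ 0 ∧
        r • {y : ℝ | ∃ (z : ℤ) (q : ℚ), y = (z : ℝ) + (q : ℝ) * x} =
          {y : ℝ | ∃ (z : ℤ) (q : ℚ), y = (z : ℝ) + (q : ℝ) * x}} = {-1, 1} := by
  obtain ⟨Q, hQ⟩ := hx2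
  have hQ0 : Q ≠ 0 := by
    intro h
    apply hx.ne_zero
    have : x ^ 2 = 0 := by rw [hQ, h]; norm_num
    exact pow_eq_zero_iff (n := 2) (by norm_num) |>.mp this
  set S : Set ℝ := {y : ℝ | ∃ (z : ℤ) (q : ℚ), y = (z : ℝ) + (q : ℝ) * x} with hS
  -- subsidiary fact: if r • S = S and r ≠ 0 then r is an integer
  have main : ∀ r : ℝ, r ≠ 0 → r • S = S → ∃ a : ℤ, r = (a : ℝ) := by
    intro r hr0 hG
    -- r ∈ S
    have hrS : r ∈ S := by
      rw [← hG]
      exact ⟨1, ⟨1, 0, by norm_num⟩, by simp⟩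
    obtain ⟨a, b, hab⟩ := hrS
    -- show b = 0
    have hb : b = 0 := by
      by_contra hb
      set q : ℚ := 1 / (2 * b * Q) with hq
      have hmem : r * ((q : ℝ) * x) ∈ S := by
        rw [← hG]
        exact ⟨(q : ℝ) * x, ⟨0, q, by norm_num⟩, by simp [smul_eq_mul]⟩
      obtain ⟨z', q', hz'⟩ := hmem
      have hx2' : x * x = (Q : ℝ) := by rw [← hQ]; ring
      have hlhs : r * ((q : ℝ) * x) = (b : ℝ) * q * Q + (a : ℝ) * q * x := by
        rw [hab, show ((b : ℝ) * q * Q) = (b : ℝ) * q * (x * x) from by rw [hx2']]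
        ring
      have heq : ((z' : ℚ) : ℝ) + (q' : ℝ) * x = ((b * q * Q : ℚ) : ℝ) + ((a * q : ℚ) : ℝ) * x := by
        push_cast
        linarith [hz', hlhs]
      obtain ⟨h1, _⟩ := key_12 x hx _ _ _ _ heq
      have hbqQ : b * q * Q = 1 / 2 := by
        rw [hq]
        field_simp
      rw [hbqQ] at h1
      have h2 : (2 : ℚ) * z' = 1 := by rw [h1]; ring
      have h3 : (2 : ℤ) * z' = 1 := by exact_mod_cast h2
      omega
    refine ⟨a, ?_⟩
    rw [hab, hb]
    simp
  apply Set.eq_of_subset_of_subset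
  · rintro r ⟨hr0, hG⟩
    obtain ⟨a, ha⟩ := main r hr0 hG
    -- r⁻¹ ∈ S via 1 ∈ S = r • S
    have h1S : (1 : ℝ) ∈ S := ⟨1, 0, by norm_num⟩
    have h1rS : (1 : ℝ) ∈ r • S := by rw [hG]; exact h1S
    obtain ⟨s, hsS, hrs⟩ := h1rS
    have hs : s = r⁻¹ := by
      simp only [smul_eq_mul] at hrs; field_simp
      linarith [hrs]
    obtain ⟨a', b', hab'⟩ := hsS
    have hone : (1 : ℝ) = (a : ℝ) * a' + (a : ℝ) * b' * x := by
      have : r * s = 1 := by simpa [smul_eq_mul] using hrs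
      rw [ha, hab'] at this
      nlinarith [this]
    have heq : ((1 : ℚ) : ℝ) + ((0 : ℚ) : ℝ) * x = (((a : ℚ) * (a' : ℚ) : ℚ) : ℝ) + (((a : ℚ) * b' : ℚ) : ℝ) * x := by
      push_cast
      linarith [hone]
    obtain ⟨h1, _⟩ := key_12 x hx _ _ _ _ heq
    have haa' : (1 : ℤ) = a * a' := by exact_mod_cast h1
    have := Int.isUnit_iff.mp (IsUnit.of_mul_eq_one (a := a) a' haa'.symm)
    rcases this with h | h
    · right
      rw [ha, h]; norm_num
    · left
      rw [ha, h]; norm_num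
  · intro r hr
    have hneg : (-1 : ℝ) • S = S := by
      ext y
      simp only [Set.mem_smul_set, hS, Set.mem_setOf_eq]
      constructor
      · rintro ⟨s, ⟨z, q, rfl⟩, rfl⟩
        exact ⟨-z, -q, by push_cast; simp [smul_eq_mul]; ring⟩
      · rintro ⟨z, q, rfl⟩
        exact ⟨-((z : ℝ) + q * x), ⟨-z, -q, by push_cast; ring⟩, by simp [smul_eq_mul]⟩
    rcases hr with h | h
    · subst h
      exact ⟨by norm_num, hneg⟩
    · subst h
      exact ⟨one_ne_zero, one_smul _ _⟩
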